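/- Let (M, ∘, e) be an F-manifold with an eventual identity ε and a compatible, torsion-free connection ∇̃. Then for every vector field X: ∇̃_{ε^{-1}∘X}(ε) = − ε ∘ ∇̃_X(ε^{-1}) + ( (1/2)( ∇̃_{ε^{-1}}(ε) + ∇̃_ε(ε^{-1}) ) + ∇̃_e(e) ) ∘ X. -/

import Mathlib

/-- An algebraic model of the geometric setting of the paper: `R` plays the role
of the ring `C^∞(M)` of smooth functions on a manifold `M`, and `V` plays the
role of the `C^∞(M)`-module of smooth vector fields on `M`, equipped with its
Lie bracket and with the action of vector fields on functions by derivations. -/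
structure SmoothSetting (R V : Type*) [CommRing R] [LieRing V] [Module R V] where
  /-- the action `X(f)` of a vector field `X` on a function `f` -/
  deriv : V → R → R
  deriv_add : ∀ (X : V) (f g : R), deriv X (f + g) = deriv X f + deriv X g
  deriv_mul : ∀ (X : V) (f g : R), deriv X (f * g) = deriv X f * g + f * deriv X g
  add_deriv : ∀ (X Y : V) (f : R), deriv (X + Y) f = deriv X f + deriv Y f
  smul_deriv : ∀ (f : R) (X : V) (g : R), deriv (f • X) g = f * deriv X g
  bracket_deriv : ∀ (X Y : V) (f : R),
    deriv ⁅X, Y⁆ f = deriv X (deriv Y f) - deriv Y (deriv X f)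
  bracket_smul : ∀ (X : V) (f : R) (Y : V), ⁅X, f • Y⁆ = f • ⁅X, Y⁆ + deriv X f • Y

/-- `(m, e)` is an F-manifold structure: `m` is a fiber-preserving (i.e.
`C^∞(M)`-bilinear) commutative associative multiplication on vector fields with
unit field `e`, satisfying the Hertling–Manin integrability condition
`L_{X∘Y}(∘) = X ∘ L_Y(∘) + Y ∘ L_X(∘)`. -/
structure IsFManifold (R : Type*) {V : Type*} [CommRing R] [LieRing V] [Module R V]
    (m : V → V → V) (e : V) : Prop where
  add_left : ∀ X Y Z : V, m (X + Y) Z = m X Z + m Y Z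
  smul_left : ∀ (f : R) (X Y : V), m (f • X) Y = f • m X Y
  comm : ∀ X Y : V, m X Y = m Y X
  assoc : ∀ X Y Z : V, m (m X Y) Z = m X (m Y Z)
  unit : ∀ X : V, m e X = X
  hertling_manin : ∀ X Y Z W : V,
    ⁅m X Y, m Z W⁆ - m ⁅m X Y, Z⁆ W - m Z ⁅m X Y, W⁆ =
      m X (⁅Y, m Z W⁆ - m ⁅Y, Z⁆ W - m Z ⁅Y, W⁆)
        + m Y (⁅X, m Z W⁆ - m ⁅X, Z⁆ W - m Z ⁅X, W⁆)

/-- The dual multiplication `X * Y := X ∘ Y ∘ ε⁻¹` determined by an invertible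
vector field `ε` with inverse `εinv`. -/
def dualMul {V : Type*} (m : V → V → V) (εinv : V) : V → V → V :=
  fun X Y => m (m X Y) εinv

/-- `ε` (with inverse `εinv`) is an eventual identity on the F-manifold `(m, e)`:
it is invertible and the dual multiplication `X * Y = X ∘ Y ∘ ε⁻¹` defines an
F-manifold structure on `M` with unit field `ε`. -/
def IsEventualIdentity (R : Type*) {V : Type*} [CommRing R] [LieRing V] [Module R V]
    (m : V → V → V) (e ε εinv : V) : Prop :=
  m ε εinv = e ∧ IsFManifold R (dualMul m εinv) ε

/-- `nabla` is a (Koszul) connection on the tangent bundle, i.e. on vector fields. -/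
structure IsConnection {R V : Type*} [CommRing R] [LieRing V] [Module R V]
    (S : SmoothSetting R V) (nabla : V → V → V) : Prop where
  add_left : ∀ X Y Z : V, nabla (X + Y) Z = nabla X Z + nabla Y Z
  smul_left : ∀ (f : R) (X Y : V), nabla (f • X) Y = f • nabla X Y
  add_right : ∀ X Y Z : V, nabla X (Y + Z) = nabla X Y + nabla X Z
  leibniz : ∀ (X : V) (f : R) (Y : V), nabla X (f • Y) = S.deriv X f • Y + f • nabla X Y

/-- `nabla` is torsion-free. -/
def IsTorsionFree {V : Type*} [LieRing V] (nabla : V → V → V) : Prop :=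
  ∀ X Y, nabla X Y - nabla Y X = ⁅X, Y⁆

/-- The covariant derivative `∇_X(∘)(Y, Z)` of a multiplication `m` with respect
to a connection `nabla`. -/
def covMul {V : Type*} [LieRing V] (nabla m : V → V → V) (X Y Z : V) : V :=
  nabla X (m Y Z) - m (nabla X Y) Z - m Y (nabla X Z)

/-- `nabla` is compatible with the multiplication `m`: the vector valued tensor
`∇(∘)` is totally symmetric. -/
def IsCompatible {V : Type*} [LieRing V] (nabla m : V → V → V) : Prop :=
  ∀ X Y Z, covMul nabla m X Y Z = covMul nabla m Y X Z ∧
    covMul nabla m X Y Z = covMul nabla m X Z Y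

/-- The curvature `R^∇_{X,Y}Z = ∇_X∇_Y Z − ∇_Y∇_X Z − ∇_{[X,Y]}Z`. -/
def curv {V : Type*} [LieRing V] (nabla : V → V → V) (X Y Z : V) : V :=
  nabla X (nabla Y Z) - nabla Y (nabla X Z) - nabla ⁅X, Y⁆ Z

/-- `nabla` is flat. -/
def IsFlat {V : Type*} [LieRing V] (nabla : V → V → V) : Prop :=
  ∀ X Y Z, curv nabla X Y Z = 0

/-- The curvature condition
`V∘R_{Z,Y}X + Y∘R_{V,Z}X + Z∘R_{Y,V}X = 0` of Lorenzoni–Pedroni. -/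
def CurvCircCond {V : Type*} [LieRing V] (m nabla : V → V → V) : Prop :=
  ∀ X Y Z W, m W (curv nabla Z Y X) + m Y (curv nabla W Z X)
    + m Z (curv nabla Y W X) = 0

/-- A special family of connections on the F-manifold `(m, e)`: the family of
all `∇̃^V_X(Y) = ∇̃_X(Y) + V∘X∘Y`, `V` a vector field, where `∇̃` is some
torsion-free connection compatible with `m`. -/
def IsSpecialFamily {R V : Type*} [CommRing R] [LieRing V] [Module R V]
    (S : SmoothSetting R V) (m : V → V → V) (SF : Set (V → V → V)) : Prop :=
  ∃ nt : V → V → V, IsConnection S nt ∧ IsTorsionFree nt ∧ IsCompatible nt m ∧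
    SF = { n | ∃ W : V, n = fun X Y => nt X Y + m (m W X) Y }

/-- The connection `∇^W_X(Y) = ε∘∇̃_X(ε⁻¹∘Y) − ∇̃_{ε⁻¹∘Y}(ε)∘X + W*X*Y` on the
dual F-manifold, where `*` is the dual multiplication. -/
def dualConn {V : Type*} [LieRing V] (m : V → V → V) (ε εinv : V)
    (nt : V → V → V) (W : V) : V → V → V :=
  fun X Y => m ε (nt X (m εinv Y)) - m (nt (m εinv Y) ε) X
    + dualMul m εinv (dualMul m εinv W X) Y

/-- The dual family `D_ε(S̃)` built from a chosen connection `nt ∈ S̃`. -/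
def dualFamily {V : Type*} [LieRing V] (m : V → V → V) (ε εinv : V)
    (nt : V → V → V) : Set (V → V → V) :=
  { n | ∃ W : V, n = dualConn m ε εinv nt W }

/-- The dual family `D_ε(S̃)` of a family of connections `S̃`. -/
def dualFamilyOfSet {V : Type*} [LieRing V] (m : V → V → V) (ε εinv : V)
    (SF : Set (V → V → V)) : Set (V → V → V) :=
  { n | ∃ nt ∈ SF, ∃ W : V, n = dualConn m ε εinv nt W }

/-- The second structure connection
`∇^F_X(Y) = ε∘∇̃_X(ε⁻¹∘Y) − ∇̃_{ε⁻¹∘Y}(ε)∘X` of `(M, ∘, e, ε, ∇̃)`. -/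
def secondConn {V : Type*} [LieRing V] (m : V → V → V) (ε εinv : V)
    (nt : V → V → V) : V → V → V :=
  fun X Y => m ε (nt X (m εinv Y)) - m (nt (m εinv Y) ε) X

/-- The connection
`∇_X(Y) = ε∘∇̃_X(ε⁻¹∘Y) − ∇̃_{ε⁻¹∘Y}(ε)∘X + (1/2)[ε⁻¹,ε]∘X∘Y + U*X*Y`. -/
def uDualConn {V : Type*} [LieRing V] [Module ℚ V] (m : V → V → V)
    (ε εinv U : V) (nt : V → V → V) : V → V → V :=
  fun X Y => secondConn m ε εinv nt X Y + (2 : ℚ)⁻¹ • m (m ⁅εinv, ε⁆ X) Y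
    + dualMul m εinv (dualMul m εinv U X) Y

/-- The `k`-th power `X^k` of a vector field with respect to the multiplication
`m` with unit `e`. -/
def mpow {V : Type*} (m : V → V → V) (e X : V) : ℕ → V
  | 0 => e
  | k + 1 => m X (mpow m e X k)

/-- The Legendre transformation `L_u(S̃) = { u⁻¹∘∇̃_X(u∘Y) : ∇̃ ∈ S̃ }` of a
family of connections `S̃` by an invertible vector field `u` (with inverse
`uinv`). -/
def legFamily {V : Type*} (m : V → V → V) (uinv u : V)
    (SF : Set (V → V → V)) : Set (V → V → V) :=
  { n | ∃ nt ∈ SF, n = fun X Y => m uinv (nt X (m u Y)) }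

section auxHelpers

variable {R V : Type*} [CommRing R] [LieRing V] [Module R V]
  {m : V → V → V} {e : V}

lemma aux_m_zero_left (hF : IsFManifold R m e) (X : V) : m 0 X = 0 := by
  have h := hF.add_left 0 0 X
  rw [add_zero] at h
  exact right_eq_add.mp h

lemma aux_m_neg_left (hF : IsFManifold R m e) (A B : V) : m (-A) B = - m A B := by
  have h := hF.add_left A (-A) B
  rw [add_neg_cancel, aux_m_zero_left hF] at h
  exact eq_neg_of_add_eq_zero_right h.symm

lemma aux_m_sub_left (hF : IsFManifold R m e) (A B C : V) :
    m (A - B) C = m A C - m B C := by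
  rw [sub_eq_add_neg, hF.add_left, aux_m_neg_left hF, ← sub_eq_add_neg]

lemma aux_m_sub_right (hF : IsFManifold R m e) (A B C : V) :
    m A (B - C) = m A B - m A C := by
  rw [hF.comm, aux_m_sub_left hF, hF.comm B A, hF.comm C A]

lemma aux_m_add_right (hF : IsFManifold R m e) (A B C : V) :
    m A (B + C) = m A B + m A C := by
  rw [hF.comm, hF.add_left, hF.comm B A, hF.comm C A]

lemma aux_m_half [Module ℚ V] (hF : IsFManifold R m e) (A B : V) :
    m ((2:ℚ)⁻¹ • A) B = (2:ℚ)⁻¹ • m A B := by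
  have h2 : ∀ v : V, (2:ℚ)⁻¹ • v + (2:ℚ)⁻¹ • v = v := by
    intro v; rw [← add_smul]; norm_num
  have hsum : m ((2:ℚ)⁻¹ • A) B + m ((2:ℚ)⁻¹ • A) B = m A B := by
    rw [← hF.add_left, h2]
  rw [← hsum, smul_add, h2]

end auxHelpers


/-- **Lemma 4.7.** For an F-manifold `(M, ∘, e)` with eventual
identity `ε` and compatible torsion-free connection `∇̃`, for every vector
field `X`:
`∇̃_{ε⁻¹∘X}(ε) = −ε∘∇̃_X(ε⁻¹) + ((1/2)(∇̃_{ε⁻¹}(ε) + ∇̃_ε(ε⁻¹)) + ∇̃_e(e))∘X`. -/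
theorem statement3 {R V : Type*} [CommRing R] [LieRing V] [Module R V] [Module ℚ V]
    (S : SmoothSetting R V) (m : V → V → V) (e ε εinv : V)
    (hF : IsFManifold R m e) (hev : IsEventualIdentity R m e ε εinv)
    (nt : V → V → V) (hc : IsConnection S nt) (htf : IsTorsionFree nt)
    (hcm : IsCompatible nt m) :
    ∀ X : V, nt (m εinv X) ε =
      - m ε (nt X εinv) +
        m ((2 : ℚ)⁻¹ • (nt εinv ε + nt ε εinv) + nt e e) X := by
  intro X
  obtain ⟨heps, hFd⟩ := hev
  -- basic multiplication facts
  have hme : ∀ A : V, m A e = A := fun A => by rw [hF.comm]; exact hF.unit A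
  have hie : m εinv ε = e := by rw [hF.comm]; exact heps
  have hdual : ∀ A : V, m (m ε A) εinv = A := hFd.unit
  have hdual' : ∀ A : V, m ε (m A εinv) = A := by
    intro A; rw [← hF.assoc]; exact hdual A
  -- the Lie derivative tensor of ∘ along ε
  set q : V → V → V := fun A B => ⁅ε, m A B⁆ - m ⁅ε, A⁆ B - m A ⁅ε, B⁆ with hq
  -- Step 1: L_ε(*) = 0 from Hertling–Manin for the dual multiplication
  have hP : ∀ Z W : V,
      ⁅ε, m (m Z W) εinv⁆ - m (m ⁅ε, Z⁆ W) εinv - m (m Z ⁅ε, W⁆) εinv = 0 := by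
    intro Z W
    have h := hFd.hertling_manin ε ε Z W
    simp only [dualMul] at h
    rw [hdual ε, hdual] at h
    -- h : P = P + P where P is the LHS
    exact right_eq_add.mp h
  -- Step 2: the identity (†)
  have hdagger : ∀ Z W : V,
      q (m Z W) εinv + m (q Z W) εinv + m (m Z W) ⁅ε, εinv⁆ = 0 := by
    intro Z W
    have h := hP Z W
    rw [hq]
    simp only
    rw [aux_m_sub_left hF, aux_m_sub_left hF]
    linear_combination (norm := abel) h
  -- Step 3: Q Z W = Q (Z∘W) e
  have hQmul : ∀ Z W : V, q Z W = q (m Z W) e := by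
    intro Z W
    have h1 := hdagger Z W
    have h2 := hdagger (m Z W) e
    rw [hme (m Z W)] at h2
    have h3 : m (q Z W) εinv = m (q (m Z W) e) εinv := by
      linear_combination (norm := abel) h1 - h2
    have := congrArg (m ε) h3
    rwa [hdual', hdual'] at this
  -- Step 4: Q Z W = -(Z∘W)∘[ε,e]
  have hQe : ∀ A : V, q A e = - m A ⁅ε, e⁆ := by
    intro A
    rw [hq]; simp only
    rw [hme A, hme ⁅ε, A⁆]
    abel
  have hQ : ∀ Z W : V, q Z W = - m (m Z W) ⁅ε, e⁆ := by
    intro Z W; rw [hQmul Z W, hQe]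
  -- Step 5: [ε,ε⁻¹]∘ε = 2[ε,e]
  have hce : m ⁅ε, εinv⁆ ε = ⁅ε, e⁆ + ⁅ε, e⁆ := by
    have h := hQ εinv ε
    rw [hq] at h; simp only at h
    rw [hie, lie_self, hF.comm εinv 0, aux_m_zero_left hF, hF.unit] at h
    linear_combination (norm := abel) -h
  -- hence (ε⁻¹∘X)∘[ε,e] doubled equals [ε,ε⁻¹]∘X
  have ht2 : m (m εinv X) ⁅ε, e⁆ + m (m εinv X) ⁅ε, e⁆ = m ⁅ε, εinv⁆ X := by
    have h := congrArg (m (m εinv X)) hce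
    rw [aux_m_add_right hF] at h
    calc m (m εinv X) ⁅ε, e⁆ + m (m εinv X) ⁅ε, e⁆
        = m (m εinv X) (m ⁅ε, εinv⁆ ε) := h.symm
      _ = m ⁅ε, εinv⁆ X := by
          rw [hF.comm (m εinv X) (m ⁅ε, εinv⁆ ε), hF.assoc, hF.comm ε (m εinv X),
            hF.assoc, hF.comm εinv (m X ε)]
          rw [hF.assoc, hF.comm ε εinv, hie, hme X]
  -- Step 6: assemble, rewriting brackets via torsion-freeness
  rw [← htf ε εinv, aux_m_sub_left hF] at ht2
  have h1 : nt ε (m εinv X) - nt (m εinv X) ε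
      - (m (nt ε εinv) X - m (nt εinv ε) X)
      - (m εinv (nt ε X) - m εinv (nt X ε))
      = - m (m εinv X) ⁅ε, e⁆ := by
    have h := hQ εinv X
    rw [hq] at h; simp only at h
    rw [← htf ε (m εinv X), ← htf ε εinv, ← htf ε X,
      aux_m_sub_left hF, aux_m_sub_right hF] at h
    linear_combination (norm := abel) h
  -- compatibility: T(ε,ε⁻¹,X) = T(X,ε⁻¹,ε)
  have h4 : nt ε (m εinv X) - m (nt ε εinv) X - m εinv (nt ε X)
      = nt X e - m (nt X εinv) ε - m εinv (nt X ε) := by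
    have ha := (hcm ε εinv X).1
    have hb := (hcm εinv ε X).2
    have hc2 := (hcm εinv X ε).1
    have : covMul nt m ε εinv X = covMul nt m X εinv ε := by
      rw [ha, hb, hc2]
    simpa [covMul, hie] using this
  -- ∇_X e = (∇_e e)∘X
  have h5 : nt X e = m (nt e e) X := by
    have ha := (hcm X e e).1
    have hb := (hcm e X e).2
    have : covMul nt m X e e = covMul nt m e e X := by rw [ha, hb]
    simp only [covMul, hF.unit, hme] at this
    linear_combination (norm := abel) -this
  rw [h5] at h4
  have h6 : m (nt X εinv) ε = m ε (nt X εinv) := hF.comm _ _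
  rw [h6] at h4
  -- final linear algebra over ℚ
  rw [hF.add_left, aux_m_half hF, hF.add_left]
  linear_combination (norm := module) (-1 : ℚ) • h1 + h4 + (2:ℚ)⁻¹ • ht2
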